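/- Let G be a group acting on a type α. Any ternary relation ⫶ on subsets of α satisfying invariance, monotonicity, transitivity, normality, existence and symmetry also satisfies extension. -/
import Mathlib


open scoped Pointwise

/-- any relation satisfying invariance, monotonicity, transitivity,
normality, existence and symmetry also satisfies extension. -/
theorem stmt_7 {α G : Type*} [Group G] [MulAction G α]
    (ind : Set α → Set α → Set α → Prop)
    (inv : ∀ (g : G) (A B C : Set α), ind A C B → ind (g • A) (g • C) (g • B))
    (mono : ∀ A B C A' B' : Set α, ind A C B → A' ⊆ A → B' ⊆ B → ind A' C B')
    (trans : ∀ A B C D : Set α, D ⊆ C → C ⊆ B → ind B C A → ind C D A → ind B D A)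
    (normal : ∀ A B C : Set α, ind A C B → ind (A ∪ C) C B)
    (exist : ∀ A B C : Set α,
      ∃ (A' : Set α) (g : G), (∀ x ∈ C, g • x = x) ∧ g • A = A' ∧ ind A' C B)
    (symm : ∀ A B C : Set α, ind A C B ↔ ind B C A) :
    ∀ A B C Bhat : Set α, ind A C B → B ⊆ Bhat →
      ∃ (A' : Set α) (g : G), (∀ x ∈ B ∪ C, g • x = x) ∧ g • A = A' ∧ ind A' C Bhat := by
  intro A B C Bhat hAB hBBhat
  obtain ⟨A', g, hfix, hgA, hind⟩ := exist A Bhat (B ∪ C)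
  refine ⟨A', g, hfix, hgA, ?_⟩
  -- g fixes B and C setwise
  have hsetfix : ∀ S : Set α, (∀ x ∈ S, g • x = x) → g • S = S := by
    intro S hS
    ext y
    constructor
    · rintro ⟨x, hx, rfl⟩; show g • x ∈ S; rw [hS x hx]; exact hx
    · intro hy; exact ⟨y, hy, hS y hy⟩
  have hgB : g • B = B := hsetfix B (fun x hx => hfix x (Or.inl hx))
  have hgC : g • C = C := hsetfix C (fun x hx => hfix x (Or.inr hx))
  -- ind A' C B
  have h1 : ind A' C B := by
    have := inv g A B C hAB
    rwa [hgA, hgB, hgC] at this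
  -- ind (B ∪ C) C A'
  have h2 : ind (B ∪ C) C A' := normal B A' C ((symm A' B C).mp h1)
  -- ind (Bhat ∪ (B ∪ C)) (B ∪ C) A'
  have h3 : ind (Bhat ∪ (B ∪ C)) (B ∪ C) A' :=
    normal Bhat A' (B ∪ C) ((symm A' Bhat (B ∪ C)).mp hind)
  have h4 : ind (Bhat ∪ (B ∪ C)) C A' :=
    trans A' (Bhat ∪ (B ∪ C)) (B ∪ C) C Set.subset_union_right
      Set.subset_union_right h3 h2
  exact mono A' (Bhat ∪ (B ∪ C)) C A' Bhat ((symm A' (Bhat ∪ (B ∪ C)) C).mpr h4)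
    (le_refl A') Set.subset_union_left
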